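/- arXiv:1704.03190 — 2 statements merged into one kernel-verified Lean document; each statement's English description precedes it below -/
import Mathlib

section
/- The map p ↦ exp(p̂) is injective on the open ball of radius π: if p, q ∈ ℝ³ satisfy ‖p‖₂ < π, ‖q‖₂ < π and exp(p̂) = exp(q̂), then p = q. -/
set_option maxHeartbeats 1000000

open Matrix Real

noncomputable section

/-- The skew-symmetric "hat" matrix of a vector in ℝ³. -/
def hatm (p : Fin 3 → ℝ) : Matrix (Fin 3) (Fin 3) ℝ :=
  !![0, -p 2, p 1; p 2, 0, -p 0; -p 1, p 0, 0]

/-- The Euclidean (ℓ²) norm on ℝ³. -/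
def norm2 (p : Fin 3 → ℝ) : ℝ := Real.sqrt (∑ i, p i ^ 2)

open scoped Nat

lemma sumsq_nonneg (p : Fin 3 → ℝ) : 0 ≤ ∑ i, p i ^ 2 :=
  Finset.sum_nonneg fun i _ => sq_nonneg _

lemma norm2_sq (p : Fin 3 → ℝ) : norm2 p ^ 2 = ∑ i, p i ^ 2 := Real.sq_sqrt (sumsq_nonneg p)

lemma norm2_eq_zero {p : Fin 3 → ℝ} (h : norm2 p = 0) : p = 0 := by
  have hs : ∑ i, p i ^ 2 = 0 := (Real.sqrt_eq_zero (sumsq_nonneg p)).mp h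
  funext i
  have := (Finset.sum_eq_zero_iff_of_nonneg (fun i _ => sq_nonneg (p i))).mp hs i (Finset.mem_univ i)
  simpa using pow_eq_zero_iff (n := 2) (by norm_num) |>.mp this

lemma hat_cube (p : Fin 3 → ℝ) :
    hatm p * hatm p * hatm p = (-(∑ i, p i ^ 2)) • hatm p := by
  ext i j
  fin_cases i <;> fin_cases j <;>
    simp [hatm, Matrix.mul_apply, Fin.sum_univ_three] <;> ring

lemma trace_hat (p : Fin 3 → ℝ) : (hatm p).trace = 0 := by
  simp [hatm, Matrix.trace, Fin.sum_univ_three]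

lemma trace_hat_sq (p : Fin 3 → ℝ) : (hatm p * hatm p).trace = -(2 * norm2 p ^ 2) := by
  rw [norm2_sq]
  simp [hatm, Matrix.trace, Matrix.mul_apply, Fin.sum_univ_three, Matrix.diag]
  ring

lemma hat_pow_odd (p : Fin 3 → ℝ) (k : ℕ) :
    hatm p ^ (2 * k + 1) = (-(∑ i, p i ^ 2)) ^ k • hatm p := by
  induction k with
  | zero => simp
  | succ k ih =>
    have : 2 * (k + 1) + 1 = (2 * k + 1) + 1 + 1 := by ring
    rw [this, pow_succ, pow_succ, ih, smul_mul_assoc, smul_mul_assoc, hat_cube, smul_smul,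
      pow_succ]

lemma hat_pow_even (p : Fin 3 → ℝ) (k : ℕ) :
    hatm p ^ (2 * (k + 1)) = (-(∑ i, p i ^ 2)) ^ k • (hatm p * hatm p) := by
  have : 2 * (k + 1) = (2 * k + 1) + 1 := by ring
  rw [this, pow_succ, hat_pow_odd, smul_mul_assoc]

/-- Rodrigues' formula for the matrix exponential of a hat matrix. -/
lemma rodrigues (p : Fin 3 → ℝ) :
    NormedSpace.exp (hatm p) = 1 + (Real.sin (norm2 p) / norm2 p) • hatm p
      + ((1 - Real.cos (norm2 p)) / norm2 p ^ 2) • (hatm p * hatm p) := by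
  rcases eq_or_ne (norm2 p) 0 with h0 | h0
  · have hp : p = 0 := norm2_eq_zero h0
    subst hp
    have hz : hatm 0 = 0 := by
      ext i j
      fin_cases i <;> fin_cases j <;> simp [hatm, Matrix.vecHead, Matrix.vecTail]
    rw [hz]
    simp [NormedSpace.exp_zero]
  · have ha : 0 < norm2 p := lt_of_le_of_ne (Real.sqrt_nonneg _) (Ne.symm h0)
    set a := norm2 p with haa
    have hta : ∑ i, p i ^ 2 = a ^ 2 := (norm2_sq p).symm
    rw [NormedSpace.exp_eq_tsum (𝕂 := ℝ)]
    refine HasSum.tsum_eq ?_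
    have hodd : HasSum (fun k => (((2 * k + 1)! : ℝ)⁻¹) • hatm p ^ (2 * k + 1))
        ((Real.sin a / a) • hatm p) := by
      have h1 := ((Real.hasSum_sin a).div_const a).smul_const (hatm p)
      convert h1 using 2 with k
      rw [hat_pow_odd, smul_smul, hta]
      congr 1
      have : ((2 * k + 1)! : ℝ) ≠ 0 := Nat.cast_ne_zero.mpr (Nat.factorial_ne_zero _)
      field_simp
      ring
    have heven : HasSum (fun k => (((2 * k)! : ℝ)⁻¹) • hatm p ^ (2 * k))
        (1 + ((1 - Real.cos a) / a ^ 2) • (hatm p * hatm p)) := by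
      have h1 : HasSum (fun n => (-1 : ℝ) ^ (n + 1) * a ^ (2 * (n + 1)) / (2 * (n + 1))!)
          (Real.cos a - 1) := by
        refine (hasSum_nat_add_iff (f := fun n => (-1 : ℝ) ^ n * a ^ (2 * n) / (2 * n)!) 1).mpr ?_
        simpa using Real.hasSum_cos a
      have h3 := (h1.div_const (-(a ^ 2))).smul_const (hatm p * hatm p)
      have h4 : HasSum (fun k => (((2 * (k + 1))! : ℝ)⁻¹) • hatm p ^ (2 * (k + 1)))
          (((1 - Real.cos a) / a ^ 2) • (hatm p * hatm p)) := by
        convert h3 using 2 with k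
        · rw [hat_pow_even, smul_smul, hta]
          congr 1
          have : ((2 * (k + 1))! : ℝ) ≠ 0 := Nat.cast_ne_zero.mpr (Nat.factorial_ne_zero _)
          field_simp
          ring
        · rw [show (1 - Real.cos a) / a ^ 2 = (Real.cos a - 1) / -a ^ 2 by
            rw [div_neg]; ring]
      have h4' : HasSum (fun n => (fun k => (((2 * k)! : ℝ)⁻¹) • hatm p ^ (2 * k)) (n + 1))
          (((1 - Real.cos a) / a ^ 2) • (hatm p * hatm p)) := h4
      have h5 := (hasSum_nat_add_iff
        (f := fun k => (((2 * k)! : ℝ)⁻¹) • hatm p ^ (2 * k)) 1).mp h4'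
      have hg0 : (((2 * 0)! : ℝ)⁻¹) • hatm p ^ (2 * 0) = 1 := by norm_num
      rw [Finset.range_one, Finset.sum_singleton, hg0, add_comm] at h5
      exact h5
    have := HasSum.even_add_odd (f := fun n => ((n ! : ℝ)⁻¹) • hatm p ^ n) heven hodd
    convert this using 1
    · rfl
    · abel

/-- p ↦ exp(p̂) is injective on the open ball of radius π. -/
theorem exp_hat_injective_on_ball (p q : Fin 3 → ℝ)
    (hp : norm2 p < Real.pi) (hq : norm2 q < Real.pi)
    (h : NormedSpace.exp (hatm p) = NormedSpace.exp (hatm q)) : p = q := by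
  have hp0 : 0 ≤ norm2 p := Real.sqrt_nonneg _
  have hq0 : 0 ≤ norm2 q := Real.sqrt_nonneg _
  rw [rodrigues, rodrigues] at h
  -- trace argument: cos (norm2 p) = cos (norm2 q)
  have htr := congrArg Matrix.trace h
  simp only [Matrix.trace_add, Matrix.trace_smul, Matrix.trace_one, trace_hat, trace_hat_sq,
    smul_eq_mul, mul_zero, add_zero] at htr
  have key : ∀ a : ℝ, (1 - Real.cos a) / a ^ 2 * -(2 * a ^ 2) = -(2 * (1 - Real.cos a)) := by
    intro a
    rcases eq_or_ne a 0 with rfl | ha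
    · simp
    · field_simp
  rw [key, key] at htr
  have hcos : Real.cos (norm2 p) = Real.cos (norm2 q) := by
    nlinarith [htr]
  have hab : norm2 p = norm2 q :=
    Real.injOn_cos ⟨hp0, hp.le⟩ ⟨hq0, hq.le⟩ hcos
  rcases eq_or_ne (norm2 p) 0 with h0 | h0
  · have h0' : norm2 q = 0 := hab ▸ h0
    rw [norm2_eq_zero h0, norm2_eq_zero h0']
  · have ha : 0 < norm2 p := lt_of_le_of_ne hp0 (Ne.symm h0)
    have hs : 0 < Real.sin (norm2 p) / norm2 p :=
      div_pos (Real.sin_pos_of_pos_of_lt_pi ha hp) ha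
    rw [← hab] at h
    funext i
    fin_cases i
    · have e1 := congrFun (congrFun h 2) 1
      have e2 := congrFun (congrFun h 1) 2
      simp [hatm, Matrix.add_apply, Matrix.smul_apply, Matrix.one_apply, Matrix.mul_apply,
        Fin.sum_univ_three, smul_eq_mul] at e1 e2
      have h2 : Real.sin (norm2 p) / norm2 p * p 0 = Real.sin (norm2 p) / norm2 p * q 0 := by
        linarith [e1, e2]
      exact mul_left_cancel₀ (ne_of_gt hs) h2
    · have e1 := congrFun (congrFun h 0) 2
      have e2 := congrFun (congrFun h 2) 0
      simp [hatm, Matrix.add_apply, Matrix.smul_apply, Matrix.one_apply, Matrix.mul_apply,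
        Fin.sum_univ_three, smul_eq_mul] at e1 e2
      have h2 : Real.sin (norm2 p) / norm2 p * p 1 = Real.sin (norm2 p) / norm2 p * q 1 := by
        linarith [e1, e2]
      exact mul_left_cancel₀ (ne_of_gt hs) h2
    · have e1 := congrFun (congrFun h 1) 0
      have e2 := congrFun (congrFun h 0) 1
      simp [hatm, Matrix.add_apply, Matrix.smul_apply, Matrix.one_apply, Matrix.mul_apply,
        Fin.sum_univ_three, smul_eq_mul] at e1 e2
      have h2 : Real.sin (norm2 p) / norm2 p * p 2 = Real.sin (norm2 p) / norm2 p * q 2 := by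
        linarith [e1, e2]
      exact mul_left_cancel₀ (ne_of_gt hs) h2
end
end

section
/- Strict Lie-derivative bound off consensus: let G be a connected undirected graph on n nodes with m edges and incidence matrix B, let B̂ = B ⊗ I₃, and let x = (x₁,…,xₙ) ∈ ℝ^{3n} satisfy ‖xᵢ‖₂ ≤ r for all i, for some r < π. Assume x is not in consensus, i.e., xᵢ ≠ xⱼ for some i, j. Then for every sign-selection s ∈ ℝ^{3m} for B̂ᵀ x, setting ν = B̂ s, one has νᵀ L_x ν ≥ c(r)/n > 0, where c(θ) = sinc(θ)/sinc²(θ/2). -/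
open Matrix Real

noncomputable section

/-- The unnormalized sinc function: α · sinc α = sin α, sinc 0 = 1. -/
def sinc (α : ℝ) : ℝ := if α = 0 then 1 else Real.sin α / α

/-- c(θ) = sinc(θ)/sinc²(θ/2). -/
def cfun (θ : ℝ) : ℝ := _root_.sinc θ / _root_.sinc (θ / 2) ^ 2

/-- The symmetric part L¹ₓ of the transition matrix (L¹₀ := I₃). -/
def L1mat (x : Fin 3 → ℝ) : Matrix (Fin 3) (Fin 3) ℝ :=
  if x = 0 then 1 else
    cfun (norm2 x) • (1 : Matrix (Fin 3) (Fin 3) ℝ)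
      + ((1 - cfun (norm2 x)) / norm2 x ^ 2) • vecMulVec x x

/-- The transition matrix Lₓ of the axis-angle kinematics (L₀ := I₃). -/
def Lmat (x : Fin 3 → ℝ) : Matrix (Fin 3) (Fin 3) ℝ :=
  if x = 0 then 1 else
    cfun (norm2 x) • (1 : Matrix (Fin 3) (Fin 3) ℝ)
      + ((1 - cfun (norm2 x)) / norm2 x ^ 2) • vecMulVec x x
      + (1 / 2 : ℝ) • hatm x

/-- `s` is a sign-selection for `z`: each component lies in [−1,1] and equals
`sign (z ℓ)` whenever `z ℓ ≠ 0`. -/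
def SignSel {k : Type*} (s z : k → ℝ) : Prop :=
  ∀ ℓ, s ℓ ∈ Set.Icc (-1 : ℝ) 1 ∧ (z ℓ ≠ 0 → s ℓ = Real.sign (z ℓ))

/-- Vector-valued (ℝ³-blocks) sign-selection, componentwise. -/
def SignSelV {m : ℕ} (s z : Fin m → Fin 3 → ℝ) : Prop :=
  ∀ e k, s e k ∈ Set.Icc (-1 : ℝ) 1 ∧ (z e k ≠ 0 → s e k = Real.sign (z e k))

lemma cfun_zero : cfun 0 = 1 := by simp [cfun, _root_.sinc]

lemma cfun_eq {θ : ℝ} (hθ : θ ≠ 0) (hs : Real.sin (θ/2) ≠ 0) :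
    cfun θ = (θ/2) * Real.cos (θ/2) / Real.sin (θ/2) := by
  have h2 : θ/2 ≠ 0 := div_ne_zero hθ two_ne_zero
  have hsin : Real.sin θ = 2 * Real.sin (θ/2) * Real.cos (θ/2) := by
    have h := Real.sin_two_mul (θ/2)
    rw [show 2*(θ/2) = θ by ring] at h
    exact h
  rw [cfun, _root_.sinc, _root_.sinc, if_neg hθ, if_neg h2, hsin]
  field_simp

lemma sin_mul_le_mul_sin {q p : ℝ} (hq : 0 ≤ q) (hqp : q ≤ p) (hp : p ≤ π) :
    q * Real.sin p ≤ p * Real.sin q := by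
  rcases eq_or_lt_of_le hq with h0 | h0
  · simp [← h0]
  · have hp0 : 0 < p := lt_of_lt_of_le h0 hqp
    have hmem0 : (0:ℝ) ∈ Set.Icc (0:ℝ) π := ⟨le_refl _, Real.pi_pos.le⟩
    have hmemp : p ∈ Set.Icc (0:ℝ) π := ⟨hp0.le, hp⟩
    have ha : (0:ℝ) ≤ 1 - q/p := by
      have : q/p ≤ 1 := (div_le_one hp0).2 hqp
      linarith
    have hb : (0:ℝ) ≤ q/p := by positivity
    have hab : (1 - q/p) + q/p = 1 := by ring
    have h := strictConcaveOn_sin_Icc.concaveOn.2 hmem0 hmemp ha hb hab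
    simp only [smul_eq_mul, mul_zero, Real.sin_zero, zero_add] at h
    rw [show q/p * p = q by field_simp] at h
    have h2 : q / p * Real.sin p ≤ Real.sin q := by simpa using h
    have h3 : p * (q / p * Real.sin p) = q * Real.sin p := by field_simp
    have h4 := mul_le_mul_of_nonneg_left h2 hp0.le
    linarith

lemma sin_half_pos {θ : ℝ} (h0 : 0 < θ) (hπ : θ < π) : 0 < Real.sin (θ/2) :=
  Real.sin_pos_of_pos_of_lt_pi (by linarith) (by linarith [Real.pi_pos])

lemma cos_half_pos {θ : ℝ} (h0 : 0 ≤ θ) (hπ : θ < π) : 0 < Real.cos (θ/2) :=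
  Real.cos_pos_of_mem_Ioo ⟨by linarith [Real.pi_pos], by linarith⟩

lemma cfun_pos {θ : ℝ} (h0 : 0 ≤ θ) (hπ : θ < π) : 0 < cfun θ := by
  rcases eq_or_lt_of_le h0 with h | h
  · rw [← h, cfun_zero]; norm_num
  · rw [cfun_eq h.ne' (sin_half_pos h hπ).ne']
    have := sin_half_pos h hπ
    have := cos_half_pos h0 hπ
    positivity

lemma cfun_le_one {θ : ℝ} (h0 : 0 ≤ θ) (hπ : θ < π) : cfun θ ≤ 1 := by
  rcases eq_or_lt_of_le h0 with h | h
  · rw [← h, cfun_zero]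
  · have hs := sin_half_pos h hπ
    have hc := cos_half_pos h0 hπ
    rw [cfun_eq h.ne' hs.ne']
    rw [div_le_one hs]
    have ht := Real.lt_tan (x := θ/2) (by linarith) (by linarith)
    rw [Real.tan_eq_sin_div_cos, lt_div_iff₀ hc] at ht
    nlinarith

lemma cfun_anti {a b : ℝ} (h0 : 0 ≤ a) (hab : a ≤ b) (hb : b < π) : cfun b ≤ cfun a := by
  rcases eq_or_lt_of_le h0 with h | h
  · rw [← h, cfun_zero]; exact cfun_le_one (by linarith) hb
  · have hsa := sin_half_pos h (lt_of_le_of_lt hab hb)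
    have hsb := sin_half_pos (lt_of_lt_of_le h hab) hb
    have hca := cos_half_pos h0 (lt_of_le_of_lt hab hb)
    have hcb := cos_half_pos (by linarith) hb
    rw [cfun_eq h.ne' hsa.ne', cfun_eq (by linarith : b ≠ 0) hsb.ne']
    rw [div_le_div_iff₀ hsb hsa]
    set u := a/2
    set v := b/2
    have hu : 0 < u := by positivity
    have huv : u ≤ v := by simp only [u, v]; linarith
    have hvπ : v < π/2 := by simp only [v]; linarith
    have key := sin_mul_le_mul_sin (q := v - u) (p := u + v) (by linarith) (by linarith)
      (by linarith)
    rw [Real.sin_add, Real.sin_sub] at key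
    nlinarith

lemma quad_bound {r : ℝ} (hr0 : 0 ≤ r) (hrπ : r < π) (x ν : Fin 3 → ℝ) (hx : norm2 x ≤ r) :
    cfun r * (∑ kk, ν kk ^ 2) ≤ ν ⬝ᵥ (Lmat x).mulVec ν := by
  have hS : (0:ℝ) ≤ ∑ kk, ν kk ^ 2 := Finset.sum_nonneg fun _ _ => sq_nonneg _
  have hc1 : cfun r ≤ 1 := cfun_le_one hr0 hrπ
  by_cases h0 : x = 0
  · rw [Lmat, if_pos h0, Matrix.one_mulVec]
    have hd : ν ⬝ᵥ ν = ∑ kk, ν kk ^ 2 := by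
      simp [dotProduct, sq]
    rw [hd]
    nlinarith
  · rw [Lmat, if_neg h0]
    have hn2 : 0 ≤ norm2 x := Real.sqrt_nonneg _
    have hX : norm2 x ^ 2 = ∑ kk, x kk ^ 2 :=
      Real.sq_sqrt (Finset.sum_nonneg fun _ _ => sq_nonneg _)
    have hXpos : 0 < norm2 x ^ 2 := by
      rw [hX]
      obtain ⟨kk, hkk⟩ : ∃ kk, x kk ≠ 0 := by
        by_contra h; push_neg at h; exact h0 (funext h)
      exact Finset.sum_pos' (fun j _ => sq_nonneg _) ⟨kk, Finset.mem_univ _, by positivity⟩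
    have hcr : cfun r ≤ cfun (norm2 x) := cfun_anti hn2 hx hrπ
    have hcle : cfun (norm2 x) ≤ 1 := cfun_le_one hn2 (lt_of_le_of_lt hx hrπ)
    set c := cfun (norm2 x) with hc
    set d := (1 - c) / norm2 x ^ 2 with hd
    have hd0 : 0 ≤ d := div_nonneg (by linarith) hXpos.le
    have hquad : ν ⬝ᵥ ((c • (1 : Matrix (Fin 3) (Fin 3) ℝ) + d • vecMulVec x x
          + (1/2 : ℝ) • hatm x).mulVec ν)
        = c * (∑ kk, ν kk ^ 2) + d * (∑ kk, x kk * ν kk) ^ 2 := by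
      simp [mulVec, dotProduct, Fin.sum_univ_three, vecMulVec, hatm, Matrix.add_apply,
        Matrix.smul_apply, Matrix.one_apply, smul_eq_mul]
      ring
    rw [hquad]
    nlinarith [mul_nonneg hd0 (sq_nonneg (∑ kk, x kk * ν kk)),
      mul_le_mul_of_nonneg_right hcr hS]

lemma walk_telescope {V : Type*} {G : SimpleGraph V} (f : V → ℝ) {u v : V} (w : G.Walk u v) :
    |f u - f v| ≤ (w.edges.map
      (Sym2.lift ⟨fun a b => |f a - f b|, fun a b => abs_sub_comm _ _⟩)).sum := by
  induction w with
  | nil => simp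
  | @cons a b c h p ih =>
    simp only [SimpleGraph.Walk.edges_cons, List.map_cons, List.sum_cons, Sym2.lift_mk]
    have h3 := abs_sub_le (f a) (f b) (f c)
    linarith

/-- strict Lie-derivative bound off consensus. With ν = B̂ s
(block `i` is `∑ e, B i e • s e`), one has νᵀ Lₓ ν ≥ c(r)/n > 0. -/
theorem strict_lie_derivative_bound {n m : ℕ}
    (te he : Fin m → Fin n) (hloop : ∀ e, te e ≠ he e)
    (hconn : (SimpleGraph.fromRel (fun i j => ∃ e, te e = i ∧ he e = j)).Connected)
    (B : Matrix (Fin n) (Fin m) ℝ)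
    (hB : ∀ i e, B i e = if i = te e then 1 else if i = he e then -1 else 0)
    (r : ℝ) (hr : r < Real.pi)
    (x : Fin n → Fin 3 → ℝ) (hx : ∀ i, norm2 (x i) ≤ r)
    (hnc : ∃ i j, x i ≠ x j)
    (s : Fin m → Fin 3 → ℝ)
    (hs : SignSelV s (fun e k => ∑ i, B i e * x i k)) :
    cfun r / n ≤ ∑ i, (∑ e, B i e • s e) ⬝ᵥ (Lmat (x i)).mulVec (∑ e, B i e • s e) ∧
    0 < cfun r / n := by
  classical
  obtain ⟨i₀, j₀, hxij⟩ := hnc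
  have hne : i₀ ≠ j₀ := fun h => hxij (by rw [h])
  have hr0 : (0:ℝ) ≤ r := le_trans (Real.sqrt_nonneg _) (hx i₀)
  have hnpos : 0 < (n:ℝ) := by
    have : 0 < n := i₀.pos
    exact_mod_cast this
  have hcr : 0 < cfun r := cfun_pos hr0 hr
  obtain ⟨k, hk⟩ : ∃ k, x i₀ k ≠ x j₀ k := by
    by_contra h; push_neg at h; exact hxij (funext h)
  set G := SimpleGraph.fromRel (fun i j => ∃ e, te e = i ∧ he e = j) with hG
  set z : Fin m → ℝ := fun e => x (te e) k - x (he e) k with hz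
  -- column sums of B
  have hBsplit : ∀ (e : Fin m) (i : Fin n) (f : Fin n → ℝ), B i e * f i =
      (if i = te e then f i else 0) + (if i = he e then -(f i) else 0) := by
    intro e i f
    rw [hB]
    rcases eq_or_ne i (te e) with h1 | h1
    · have h2 : i ≠ he e := by rw [h1]; exact hloop e
      simp [h1, h2, hloop e]
    · rcases eq_or_ne i (he e) with h2 | h2
      · simp [h1, h2, Ne.symm (hloop e)]
      · simp [h1, h2]
  have hzB : ∀ e, (∑ i, B i e * x i k) = z e := by
    intro e
    rw [Finset.sum_congr rfl fun i _ => hBsplit e i (fun j => x j k),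
      Finset.sum_add_distrib, Finset.sum_ite_eq', Finset.sum_ite_eq']
    simp [hz, sub_eq_add_neg]
  have hBsum : ∀ e, (∑ i, B i e) = 0 := by
    intro e
    have : ∀ i, B i e = B i e * (fun _ : Fin n => (1:ℝ)) i := by intro i; simp
    rw [Finset.sum_congr rfl fun i _ => this i,
      Finset.sum_congr rfl fun i _ => hBsplit e i (fun _ => (1:ℝ)),
      Finset.sum_add_distrib, Finset.sum_ite_eq', Finset.sum_ite_eq']
    simp
  set Z : ℝ := ∑ e, |z e| with hZ
  -- every graph edge comes from some e
  have hedge : ∀ ε ∈ G.edgeSet, ∃ e : Fin m, ε = s(te e, he e) := by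
    intro ε hε
    induction ε using Sym2.ind with
    | _ u v =>
      rw [SimpleGraph.mem_edgeSet, hG, SimpleGraph.fromRel_adj] at hε
      rcases hε.2 with ⟨e, h1, h2⟩ | ⟨e, h1, h2⟩
      · exact ⟨e, by rw [h1, h2]⟩
      · exact ⟨e, by rw [h1, h2, Sym2.eq_swap]⟩
  -- m is nonempty
  have hmne : Nonempty (Fin m) := by
    obtain ⟨w⟩ := hconn.preconnected i₀ j₀
    cases w with
    | nil => exact absurd rfl hne
    | cons h p =>
      rw [hG, SimpleGraph.fromRel_adj] at h
      rcases h.2 with ⟨e, _⟩ | ⟨e, _⟩ <;> exact ⟨e⟩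
  have hφex : ∀ ε : Sym2 (Fin n), ∃ e : Fin m, ε ∈ G.edgeSet → ε = s(te e, he e) := by
    intro ε
    by_cases h : ε ∈ G.edgeSet
    · obtain ⟨e, he'⟩ := hedge ε h
      exact ⟨e, fun _ => he'⟩
    · exact ⟨Classical.arbitrary _, fun h' => absurd h' h⟩
  choose φ hφ using hφex
  set D : Sym2 (Fin n) → ℝ :=
    Sym2.lift ⟨fun a b => |x a k - x b k|, fun a b => abs_sub_comm _ _⟩ with hD
  -- spread bound
  have hspread : ∀ p q : Fin n, |x p k - x q k| ≤ Z := by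
    intro p q
    obtain ⟨w⟩ := hconn.preconnected p q
    have h1 : |x p k - x q k| ≤ (w.bypass.edges.map D).sum :=
      walk_telescope (fun v => x v k) w.bypass
    have hnd : w.bypass.edges.Nodup := w.bypass_isPath.isTrail.edges_nodup
    rw [← List.sum_toFinset D hnd] at h1
    set T := w.bypass.edges.toFinset with hT
    have hTsub : ∀ ε ∈ T, ε ∈ G.edgeSet := by
      intro ε hε
      exact w.bypass.edges_subset_edgeSet (List.mem_toFinset.1 hε)
    have h2 : ∑ ε ∈ T, D ε = ∑ ε ∈ T, |z (φ ε)| := by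
      apply Finset.sum_congr rfl
      intro ε hε
      conv_lhs => rw [hφ ε (hTsub ε hε)]
      simp [hD, hz]
    have hinj : ∀ ε₁ ∈ T, ∀ ε₂ ∈ T, φ ε₁ = φ ε₂ → ε₁ = ε₂ := by
      intro ε₁ h₁ ε₂ h₂ hE
      rw [hφ ε₁ (hTsub ε₁ h₁), hφ ε₂ (hTsub ε₂ h₂), hE]
    have h3 : ∑ ε ∈ T, |z (φ ε)| = ∑ e ∈ T.image φ, |z e| :=
      (Finset.sum_image (f := fun e => |z e|) hinj).symm
    have h4 : ∑ e ∈ T.image φ, |z e| ≤ Z :=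
      Finset.sum_le_sum_of_subset_of_nonneg (Finset.subset_univ _)
        (fun _ _ _ => abs_nonneg _)
    linarith
  have hZpos : 0 < Z :=
    lt_of_lt_of_le (abs_pos.2 (sub_ne_zero.2 hk)) (hspread i₀ j₀)
  set ν : Fin n → ℝ := fun i => ∑ e, B i e * s e k with hν
  have hsum0 : ∑ i, ν i = 0 := by
    simp only [hν]
    rw [Finset.sum_comm]
    apply Finset.sum_eq_zero
    intro e _
    rw [← Finset.sum_mul, hBsum e, zero_mul]
  have hXZ : ∑ i, x i k * ν i = Z := by
    have h1 : ∑ i, x i k * ν i = ∑ e, (∑ i, B i e * x i k) * s e k := by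
      simp only [hν, Finset.mul_sum]
      rw [Finset.sum_comm]
      apply Finset.sum_congr rfl
      intro e _
      rw [Finset.sum_mul]
      apply Finset.sum_congr rfl
      intro i _
      ring
    have h2 : ∀ e, (∑ i, B i e * x i k) * s e k = |z e| := by
      intro e
      rcases eq_or_ne (z e) 0 with h | h
      · rw [hzB e, h]; simp
      · have h' := (hs e k).2
        simp only [hzB e] at h'
        rw [hzB e, h' h]
        rcases lt_trichotomy (z e) 0 with hlt | heq | hgt
        · rw [Real.sign_of_neg hlt, abs_of_neg hlt]; ring
        · exact absurd heq h
        · rw [Real.sign_of_pos hgt, abs_of_pos hgt]; ring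
    rw [h1, Finset.sum_congr rfl fun e _ => h2 e]
  have hb : ∀ i, (x i k - x j₀ k) ^ 2 ≤ Z ^ 2 := by
    intro i
    have h' := abs_le.1 (hspread i j₀)
    exact sq_le_sq' (by linarith [h'.1]) h'.2
  have hfg : ∑ i, (x i k - x j₀ k) * ν i = Z := by
    have h : ∑ i, (x i k - x j₀ k) * ν i = ∑ i, x i k * ν i - x j₀ k * ∑ i, ν i := by
      rw [Finset.mul_sum, ← Finset.sum_sub_distrib]
      apply Finset.sum_congr rfl
      intro i _
      ring
    rw [h, hsum0, hXZ]
    ring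
  have hcs := Finset.sum_mul_sq_le_sq_mul_sq Finset.univ (fun i => x i k - x j₀ k) ν
  rw [hfg] at hcs
  have hsumsq : ∑ i, (x i k - x j₀ k) ^ 2 ≤ (n : ℝ) * Z ^ 2 := by
    calc ∑ i, (x i k - x j₀ k) ^ 2 ≤ ∑ _i : Fin n, Z ^ 2 :=
          Finset.sum_le_sum fun i _ => hb i
    _ = (n : ℝ) * Z ^ 2 := by
          rw [Finset.sum_const, Finset.card_univ, Fintype.card_fin, nsmul_eq_mul]
  have hνs : (0:ℝ) ≤ ∑ i, ν i ^ 2 := Finset.sum_nonneg fun _ _ => sq_nonneg _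
  have hν2 : 1 / (n : ℝ) ≤ ∑ i, ν i ^ 2 := by
    have h5 : Z ^ 2 ≤ ((n : ℝ) * Z ^ 2) * ∑ i, ν i ^ 2 :=
      le_trans hcs (mul_le_mul_of_nonneg_right hsumsq hνs)
    rw [div_le_iff₀ hnpos]
    nlinarith [pow_pos hZpos 2]
  refine ⟨?_, div_pos hcr hnpos⟩
  have hterm : ∀ i, cfun r * ν i ^ 2 ≤
      (∑ e, B i e • s e) ⬝ᵥ (Lmat (x i)).mulVec (∑ e, B i e • s e) := by
    intro i
    have hq := quad_bound hr0 hr (x i) (∑ e, B i e • s e) (hx i)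
    have hνeq : (∑ e, B i e • s e) k = ν i := by
      simp [hν, Finset.sum_apply]
    have hle : ν i ^ 2 ≤ ∑ kk, ((∑ e, B i e • s e) kk) ^ 2 := by
      rw [← hνeq]
      exact Finset.single_le_sum (f := fun kk => ((∑ e, B i e • s e) kk) ^ 2)
        (fun _ _ => sq_nonneg _) (Finset.mem_univ k)
    calc cfun r * ν i ^ 2 ≤ cfun r * ∑ kk, ((∑ e, B i e • s e) kk) ^ 2 :=
          mul_le_mul_of_nonneg_left hle hcr.le
    _ ≤ _ := hq
  calc cfun r / n = cfun r * (1 / n) := by ring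
  _ ≤ cfun r * ∑ i, ν i ^ 2 := mul_le_mul_of_nonneg_left hν2 hcr.le
  _ = ∑ i, cfun r * ν i ^ 2 := Finset.mul_sum _ _ _
  _ ≤ _ := Finset.sum_le_sum fun i _ => hterm i
end
end
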